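/- For every natural number n, \sum_{k=2}^{\infty} \zeta(k) k^n / 2^k = \log 2 + \sum_{k=1}^{n} S(n+1, k+1) * k! * (1 - 2^{-k-1}) * \zeta(k+1), where S denotes Stirling numbers of the second kind and \zeta is the Riemann zeta function. -/

import Mathlib

/-- Stirling numbers of the second kind. -/
def stirling2 : ℕ → ℕ → ℕ
  | 0, 0 => 1
  | 0, _ + 1 => 0
  | _ + 1, 0 => 0
  | n + 1, k + 1 => stirling2 n k + (k + 1) * stirling2 n (k + 1)

/-- The Riemann zeta function at a natural number argument, `ζ(s) = ∑_{m≥1} 1/m^s`. -/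
noncomputable def zetaNat (s : ℕ) : ℝ := ∑' m : ℕ, 1 / ((m : ℝ) + 1) ^ s

lemma stirling2_def (n k : ℕ) :
    stirling2 (n+1) (k+1) = stirling2 n k + (k + 1) * stirling2 n (k + 1) := rfl

lemma stirling2_zz : stirling2 0 0 = 1 := rfl

open Filter Real Topology

lemma stirling2_zero_right (n : ℕ) : stirling2 (n + 1) 0 = 0 := rfl

lemma stirling2_eq_zero_of_lt : ∀ {n k : ℕ}, n < k → stirling2 n k = 0
  | 0, 0, h => by omega
  | 0, k + 1, _ => rfl
  | n + 1, 0, h => by omega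
  | n + 1, k + 1, h => by
      rw [show stirling2 (n+1) (k+1) = stirling2 n k + (k+1) * stirling2 n (k+1) from rfl,
        stirling2_eq_zero_of_lt (by omega), stirling2_eq_zero_of_lt (by omega), mul_zero, add_zero]

lemma stirling2_one_right : ∀ n : ℕ, stirling2 (n + 1) 1 = 1
  | 0 => rfl
  | n + 1 => by
      rw [show stirling2 (n+2) 1 = stirling2 (n+1) 0 + 1 * stirling2 (n+1) 1 from rfl,
        stirling2_zero_right, stirling2_one_right n]

lemma mul_choose_eq (k j : ℕ) : k * k.choose j = j * k.choose j + (j + 1) * k.choose (j + 1) := by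
  rcases le_or_gt j k with h | h
  · have h1 : k.choose (j + 1) * (j + 1) = k.choose j * (k - j) := Nat.choose_succ_right_eq k j
    have h2 : j + (k - j) = k := by omega
    calc k * k.choose j = (j + (k - j)) * k.choose j := by rw [h2]
      _ = j * k.choose j + k.choose j * (k - j) := by ring
      _ = j * k.choose j + (j + 1) * k.choose (j + 1) := by rw [← h1]; ring
  · rw [Nat.choose_eq_zero_of_lt h, Nat.choose_eq_zero_of_lt (by omega)]
    simp

lemma pow_eq_sum_stirling2 (n k : ℕ) :
    k ^ n = ∑ j ∈ Finset.range (n + 1), stirling2 n j * j.factorial * k.choose j := by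
  induction n with
  | zero => simp [stirling2]
  | succ n ih =>
      have key : ∑ j ∈ Finset.range (n + 1), stirling2 n j * j.factorial * (j * k.choose j)
          = ∑ j ∈ Finset.range (n + 1),
              (j + 1) * stirling2 n (j + 1) * (j + 1).factorial * k.choose (j + 1) := by
        have := Finset.sum_range_succ' (fun j => stirling2 n j * j.factorial * (j * k.choose j)) (n + 1)
        rw [Finset.sum_range_succ (fun j => stirling2 n j * j.factorial * (j * k.choose j)) (n + 1)] at this
        simp only [mul_zero, zero_mul, add_zero] at this
        rw [stirling2_eq_zero_of_lt (by omega)] at this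
        simp only [zero_mul, mul_zero, add_zero, zero_add] at this
        rw [this]
        apply Finset.sum_congr rfl
        intro j _
        rw [Nat.factorial_succ]
        ring
      calc k ^ (n + 1) = (∑ j ∈ Finset.range (n + 1), stirling2 n j * j.factorial * k.choose j) * k := by
            rw [← ih, pow_succ]
        _ = ∑ j ∈ Finset.range (n + 1), stirling2 n j * j.factorial *
              (j * k.choose j + (j + 1) * k.choose (j + 1)) := by
            rw [Finset.sum_mul]
            exact Finset.sum_congr rfl fun j _ => by rw [mul_assoc, ← mul_choose_eq]; ring
        _ = ∑ j ∈ Finset.range (n + 1), (stirling2 n j * j.factorial * (j * k.choose j)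
              + stirling2 n j * (j + 1).factorial * k.choose (j + 1)) := by
            exact Finset.sum_congr rfl fun j _ => by rw [Nat.factorial_succ]; ring
        _ = ∑ j ∈ Finset.range (n + 1), ((j + 1) * stirling2 n (j + 1) * (j + 1).factorial * k.choose (j + 1)
              + stirling2 n j * (j + 1).factorial * k.choose (j + 1)) := by
            rw [Finset.sum_add_distrib, Finset.sum_add_distrib, key]
        _ = ∑ j ∈ Finset.range (n + 1), stirling2 (n + 1) (j + 1) * (j + 1).factorial * k.choose (j + 1) := by
            exact Finset.sum_congr rfl fun j _ => by
              rw [show stirling2 (n+1) (j+1) = stirling2 n j + (j+1) * stirling2 n (j+1) from rfl]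
              ring
        _ = ∑ j ∈ Finset.range (n + 2), stirling2 (n + 1) j * j.factorial * k.choose j := by
            rw [Finset.sum_range_succ' (fun j => stirling2 (n + 1) j * j.factorial * k.choose j) (n + 1)]
            rw [stirling2_zero_right]
            simp

lemma hasSum_choose_mul_pow {x : ℝ} (h0 : 0 ≤ x) (h1 : x < 1) (j : ℕ) :
    HasSum (fun k : ℕ => (k.choose j : ℝ) * x ^ k) (x ^ j / (1 - x) ^ (j + 1)) := by
  have hn : ‖x‖ < 1 := by rwa [Real.norm_eq_abs, abs_of_nonneg h0]
  have h := (hasSum_choose_mul_geometric_of_norm_lt_one j hn).mul_left (x ^ j)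
  have e1 : (fun i : ℕ => x ^ j * (((i + j).choose j : ℝ) * x ^ i))
      = fun i : ℕ => ((i + j).choose j : ℝ) * x ^ (i + j) :=
    funext fun i => by rw [pow_add]; ring
  have e2 : x ^ j * (1 / (1 - x) ^ (j + 1)) = x ^ j / (1 - x) ^ (j + 1) := by ring
  rw [e1, e2] at h
  rw [hasSum_nat_add_iff (f := fun k : ℕ => (k.choose j : ℝ) * x ^ k) j] at h
  have : ∑ i ∈ Finset.range j, (i.choose j : ℝ) * x ^ i = 0 := by
    apply Finset.sum_eq_zero
    intro i hi
    rw [Nat.choose_eq_zero_of_lt (Finset.mem_range.1 hi)]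
    simp
  rwa [this, add_zero] at h

lemma summable_one_div_sq : Summable (fun m : ℕ => 1 / ((m : ℝ) + 1) ^ 2) := by
  have := (Real.summable_one_div_nat_pow (p := 2)).2 (by norm_num)
  have h2 := (summable_nat_add_iff (f := fun n : ℕ => 1 / (n : ℝ) ^ 2) 1).2 this
  exact h2.congr fun m => by push_cast; ring_nf

lemma hasSum_log_two :
    HasSum (fun m : ℕ => 1 / (2 * (m : ℝ) + 1) - 1 / (2 * (m : ℝ) + 2)) (Real.log 2) := by
  have hsummable : Summable (fun m : ℕ => 1 / (2 * (m : ℝ) + 1) - 1 / (2 * (m : ℝ) + 2)) := by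
    refine Summable.of_nonneg_of_le ?_ ?_ summable_one_div_sq
    · intro m
      have h1 : (0:ℝ) < 2 * (m:ℝ) + 1 := by positivity
      rw [sub_nonneg]
      exact one_div_le_one_div_of_le h1 (by linarith)
    · intro m
      have h1 : (0:ℝ) < 2 * (m:ℝ) + 1 := by positivity
      have h2 : (0:ℝ) < 2 * (m:ℝ) + 2 := by positivity
      have h3 : (0:ℝ) < ((m:ℝ) + 1) ^ 2 := by positivity
      rw [div_sub_div _ _ (ne_of_gt h1) (ne_of_gt h2), div_le_div_iff₀ (by positivity) h3]
      nlinarith [sq_nonneg ((m:ℝ))]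
  rw [hsummable.hasSum_iff_tendsto_nat]
  have key : ∀ M : ℕ, ∑ m ∈ Finset.range M, (1 / (2 * (m : ℝ) + 1) - 1 / (2 * (m : ℝ) + 2))
      = (harmonic (2 * M) : ℝ) - (harmonic M : ℝ) := by
    intro M
    induction M with
    | zero => simp
    | succ M ih =>
        rw [Finset.sum_range_succ, ih, show 2 * (M + 1) = 2 * M + 1 + 1 by ring,
          harmonic_succ, harmonic_succ, harmonic_succ]
        push_cast
        have hM1 : (1:ℝ) + (M:ℝ) ≠ 0 := by positivity
        have hM2 : (1:ℝ) + (M:ℝ) * 2 ≠ 0 := by positivity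
        have hM3 : (2:ℝ) + (M:ℝ) * 2 ≠ 0 := by positivity
        field_simp
        ring
  simp_rw [key]
  have h2M : Tendsto (fun M : ℕ => 2 * M) atTop atTop :=
    tendsto_atTop_atTop.mpr fun b => ⟨b, fun a ha => by omega⟩
  have t1 : Tendsto (fun M : ℕ => ((harmonic (2 * M) : ℝ) - Real.log (2 * M : ℕ))
      - ((harmonic M : ℝ) - Real.log M) + Real.log 2) atTop (𝓝 (Real.log 2)) := by
    have := (Real.tendsto_harmonic_sub_log.comp h2M).sub Real.tendsto_harmonic_sub_log
    simpa using (this.add_const (Real.log 2))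
  apply t1.congr'
  filter_upwards [eventually_gt_atTop 0] with M hM
  have hM' : (0:ℝ) < M := by exact_mod_cast hM
  have : ((2 * M : ℕ) : ℝ) = 2 * (M : ℝ) := by push_cast; ring
  rw [this, Real.log_mul (by norm_num) (ne_of_gt hM')]
  ring

lemma summable_zeta_term {s : ℕ} (hs : 2 ≤ s) : Summable (fun m : ℕ => 1 / ((m : ℝ) + 1) ^ s) := by
  have h2 : Summable (fun m : ℕ => 1 / ((m : ℝ) + 1) ^ 2) := by
    have := (Real.summable_one_div_nat_pow (p := 2)).2 (by norm_num)
    have h2 := (summable_nat_add_iff (f := fun n : ℕ => 1 / (n : ℝ) ^ 2) 1).2 this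
    exact h2.congr fun m => by push_cast; ring_nf
  refine Summable.of_nonneg_of_le (fun m => by positivity) (fun m => ?_) h2
  have hb0 : (0:ℝ) ≤ 1 / ((m : ℝ) + 1) := by positivity
  have hb1 : 1 / ((m : ℝ) + 1) ≤ 1 := by
    rw [div_le_one (by positivity)]; linarith [Nat.cast_nonneg (α := ℝ) m]
  calc 1 / ((m : ℝ) + 1) ^ s = (1 / ((m : ℝ) + 1)) ^ s := by rw [one_div_pow]
    _ ≤ (1 / ((m : ℝ) + 1)) ^ 2 := pow_le_pow_of_le_one hb0 hb1 hs
    _ = 1 / ((m : ℝ) + 1) ^ 2 := by rw [one_div_pow]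

lemma hasSum_zetaNat {s : ℕ} (hs : 2 ≤ s) :
    HasSum (fun m : ℕ => 1 / ((m : ℝ) + 1) ^ s) (zetaNat s) := (summable_zeta_term hs).hasSum

lemma zetaNat_nonneg (s : ℕ) : 0 ≤ zetaNat s :=
  tsum_nonneg fun m => by positivity

lemma zetaNat_le_two {s : ℕ} (hs : 2 ≤ s) : zetaNat s ≤ zetaNat 2 := by
  refine Summable.tsum_le_tsum (fun m => ?_) (summable_zeta_term hs) (summable_zeta_term le_rfl)
  have hb0 : (0:ℝ) ≤ 1 / ((m : ℝ) + 1) := by positivity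
  have hb1 : 1 / ((m : ℝ) + 1) ≤ 1 := by
    rw [div_le_one (by positivity)]; linarith [Nat.cast_nonneg (α := ℝ) m]
  calc 1 / ((m : ℝ) + 1) ^ s = (1 / ((m : ℝ) + 1)) ^ s := by rw [one_div_pow]
    _ ≤ (1 / ((m : ℝ) + 1)) ^ 2 := pow_le_pow_of_le_one hb0 hb1 hs
    _ = 1 / ((m : ℝ) + 1) ^ 2 := by rw [one_div_pow]

lemma hasSum_odd_zeta {s : ℕ} (hs : 2 ≤ s) :
    HasSum (fun m : ℕ => (1 / (2 * (m : ℝ) + 1)) ^ s)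
      ((1 - (2:ℝ) ^ (-(s:ℤ))) * zetaNat s) := by
  set f : ℕ → ℝ := fun m => 1 / ((m : ℝ) + 1) ^ s with hf
  have hζ : HasSum f (zetaNat s) := hasSum_zetaNat hs
  have hodd : HasSum (fun m : ℕ => f (2 * m + 1)) ((1/2:ℝ) ^ s * zetaNat s) := by
    have := hζ.mul_left ((1/2:ℝ) ^ s)
    refine this.congr_fun fun m => ?_
    simp only [hf]
    push_cast
    rw [← one_div_pow, ← one_div_pow, ← mul_pow]
    congr 1
    rw [div_mul_div_comm, one_mul]
    congr 1
    ring
  have heven_s : Summable (fun m : ℕ => f (2 * m)) :=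
    hζ.summable.comp_injective fun a b hab => by omega
  have heven : HasSum (fun m : ℕ => f (2 * m)) (∑' m, f (2 * m)) := heven_s.hasSum
  have htot := heven.even_add_odd hodd
  have hval : ∑' m, f (2 * m) = zetaNat s - (1/2:ℝ) ^ s * zetaNat s := by
    have := htot.unique hζ
    linarith
  rw [hval] at heven
  have hcoef : zetaNat s - (1/2:ℝ) ^ s * zetaNat s = (1 - (2:ℝ) ^ (-(s:ℤ))) * zetaNat s := by
    rw [zpow_neg, zpow_natCast]
    rw [one_div, inv_pow] at *
    ring
  rw [hcoef] at heven
  refine heven.congr_fun fun m => ?_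
  simp only [hf]
  push_cast
  rw [one_div_pow]

lemma per_m (n m : ℕ) :
    HasSum (fun k : ℕ => ((k:ℝ)+2)^n * (1/(2*(m:ℝ)+2))^(k+2))
      ((1/(2*(m:ℝ)+1) - 1/(2*(m:ℝ)+2))
        + ∑ j ∈ Finset.Icc 1 n, (stirling2 n j : ℝ) * j.factorial * (1/(2*(m:ℝ)+1))^(j+1)
        + ∑ j ∈ Finset.Icc 2 n, (stirling2 n j : ℝ) * j.factorial * (1/(2*(m:ℝ)+1))^j) := by
  set A : ℝ := 2*(m:ℝ)+1 with hA
  set B : ℝ := 2*(m:ℝ)+2 with hB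
  have hA0 : (0:ℝ) < A := by rw [hA]; positivity
  have hB0 : (0:ℝ) < B := by rw [hB]; positivity
  have hBA : B = A + 1 := by rw [hA, hB]; ring
  set x : ℝ := 1/B with hx
  set y : ℝ := 1/A with hy
  have hx0 : 0 ≤ x := by positivity
  have hx1 : x < 1 := by rw [hx, div_lt_one hB0]; rw [hB]; linarith [Nat.cast_nonneg (α := ℝ) m]
  have h1x : 1 - x = A / B := by rw [hx, hBA]; field_simp; ring
  -- value of the shifted choose series
  have hval : ∀ j : ℕ, x ^ j / (1 - x) ^ (j + 1) = y ^ j + y ^ (j + 1) := by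
    intro j
    have h1 : x ^ j / (1 - x) ^ (j + 1) = y ^ j * (B / A) := by
      rw [h1x, hx]
      calc (1/B)^j / (A/B)^(j+1) = (1/B)^j * (B/A)^(j+1) := by
            rw [div_eq_mul_inv, ← inv_pow, inv_div]
        _ = ((1/B) * (B/A))^j * (B/A) := by rw [pow_succ, ← mul_assoc, ← mul_pow]
        _ = y^j * (B/A) := by
            congr 2
            rw [hy]
            field_simp
    have h2 : y ^ j + y ^ (j+1) = y ^ j * (B / A) := by
      rw [pow_succ, hBA, hy]
      field_simp
    rw [h1, h2]
  -- shifted HasSum for each j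
  have hshift : ∀ j : ℕ, HasSum (fun k : ℕ => (((k+2).choose j : ℝ)) * x ^ (k+2))
      (y ^ j + y ^ (j + 1) - (Nat.choose 0 j : ℝ) - (Nat.choose 1 j : ℝ) * x) := by
    intro j
    have h := hasSum_choose_mul_pow hx0 hx1 j
    have h2 := (hasSum_nat_add_iff (f := fun k : ℕ => (k.choose j : ℝ) * x ^ k)
      (g := y ^ j + y ^ (j + 1) - (Nat.choose 0 j : ℝ) - (Nat.choose 1 j : ℝ) * x) 2).mpr ?_
    · exact h2
    · show HasSum (fun k : ℕ => (k.choose j : ℝ) * x ^ k) _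
      convert h using 1
      rw [Finset.sum_range_succ, Finset.sum_range_succ, Finset.sum_range_zero, hval j]
      simp only [pow_zero, pow_one, mul_one]
      ring
  -- sum over j
  have hsum := hasSum_sum (s := Finset.range (n+1))
    (f := fun j (k : ℕ) => (stirling2 n j : ℝ) * j.factorial * (((k+2).choose j : ℝ) * x ^ (k+2)))
    (a := fun j => (stirling2 n j : ℝ) * j.factorial *
      (y ^ j + y ^ (j + 1) - (Nat.choose 0 j : ℝ) - (Nat.choose 1 j : ℝ) * x))
    (fun j _ => ((hshift j).mul_left _))
  -- identify the function
  have hfun : ∀ k : ℕ, ∑ j ∈ Finset.range (n+1),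
      (stirling2 n j : ℝ) * j.factorial * (((k+2).choose j : ℝ) * x ^ (k+2))
      = ((k:ℝ)+2)^n * x^(k+2) := by
    intro k
    have := pow_eq_sum_stirling2 n (k+2)
    have hcast : (((k+2) ^ n : ℕ) : ℝ)
        = ∑ j ∈ Finset.range (n + 1), (stirling2 n j : ℝ) * j.factorial * ((k+2).choose j : ℝ) := by
      rw [this]; push_cast; ring_nf
    calc ∑ j ∈ Finset.range (n+1),
        (stirling2 n j : ℝ) * j.factorial * (((k+2).choose j : ℝ) * x ^ (k+2))
        = (∑ j ∈ Finset.range (n+1),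
            (stirling2 n j : ℝ) * j.factorial * ((k+2).choose j : ℝ)) * x ^ (k+2) := by
          rw [Finset.sum_mul]; exact Finset.sum_congr rfl fun j _ => by ring
      _ = ((k:ℝ)+2)^n * x^(k+2) := by rw [← hcast]; push_cast; ring
  -- identify the value
  have hvalue : ∑ j ∈ Finset.range (n+1), (stirling2 n j : ℝ) * j.factorial *
      (y ^ j + y ^ (j + 1) - (Nat.choose 0 j : ℝ) - (Nat.choose 1 j : ℝ) * x)
      = (y - x)
        + ∑ j ∈ Finset.Icc 1 n, (stirling2 n j : ℝ) * j.factorial * y^(j+1)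
        + ∑ j ∈ Finset.Icc 2 n, (stirling2 n j : ℝ) * j.factorial * y^j := by
    cases n with
    | zero =>
        simp [stirling2_zz]
    | succ N =>
        set f : ℕ → ℝ := fun j => (stirling2 (N+1) j : ℝ) * j.factorial *
          (y ^ j + y ^ (j + 1) - (Nat.choose 0 j : ℝ) - (Nat.choose 1 j : ℝ) * x) with hf
        have lhs_eq : ∑ j ∈ Finset.range (N+2), f j
            = ∑ j ∈ Finset.range N, f (j+2) + f 1 + f 0 := by
          rw [Finset.sum_range_succ' f (N+1), Finset.sum_range_succ' (fun j => f (j+1)) N]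
        rw [lhs_eq]
        have hf0 : f 0 = 0 := by
          simp [hf, stirling2_zero_right]
        have hf1 : f 1 = y + y^2 - x := by
          simp [hf, stirling2_one_right]
        have hIcc1 : ∑ j ∈ Finset.Icc 1 (N+1), (stirling2 (N+1) j : ℝ) * j.factorial * y^(j+1)
            = ∑ i ∈ Finset.range N,
                (stirling2 (N+1) (i+2) : ℝ) * (i+2).factorial * y^(i+3) + y^2 := by
          rw [← Finset.Ico_add_one_right_eq_Icc, Finset.sum_Ico_eq_sum_range]
          norm_num
          rw [Finset.sum_range_succ' (fun i => (stirling2 (N+1) (1+i) : ℝ) * (1+i).factorial * y^((1+i)+1)) N]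
          rw [stirling2_one_right]
          norm_num
          congr 1
          funext i
          rw [show 1 + (i + 1) = i + 2 from by omega, show i + 2 + 1 = i + 3 from rfl]
        have hIcc2 : ∑ j ∈ Finset.Icc 2 (N+1), (stirling2 (N+1) j : ℝ) * j.factorial * y^j
            = ∑ i ∈ Finset.range N, (stirling2 (N+1) (i+2) : ℝ) * (i+2).factorial * y^(i+2) := by
          rw [← Finset.Ico_add_one_right_eq_Icc, Finset.sum_Ico_eq_sum_range]
          norm_num
          apply Finset.sum_congr rfl
          intro i _
          have : 2 + i = i + 2 := by ring
          rw [this]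
        rw [hIcc1, hIcc2, hf0, hf1]
        have hterm : ∀ i, f (i+2) = (stirling2 (N+1) (i+2) : ℝ) * (i+2).factorial * y^(i+3)
            + (stirling2 (N+1) (i+2) : ℝ) * (i+2).factorial * y^(i+2) := by
          intro i
          simp only [hf, Nat.choose_eq_zero_of_lt (show 0 < i+2 by omega),
            Nat.choose_eq_zero_of_lt (show 1 < i+2 by omega)]
          push_cast
          ring_nf
        rw [Finset.sum_congr rfl (fun i _ => hterm i), Finset.sum_add_distrib]
        ring
  rw [hvalue] at hsum
  refine HasSum.congr_fun hsum ?_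
  intro k
  rw [← hfun k]

noncomputable def lam (s : ℕ) : ℝ := (1 - (2:ℝ) ^ (-(s:ℤ))) * zetaNat s

lemma stirling_id (n : ℕ) :
    ∑ k ∈ Finset.Icc 1 n, (stirling2 (n+1) (k+1) : ℝ) * k.factorial * lam (k+1)
      = ∑ j ∈ Finset.Icc 1 n, (stirling2 n j : ℝ) * j.factorial * lam (j+1)
        + ∑ j ∈ Finset.Icc 2 n, (stirling2 n j : ℝ) * j.factorial * lam j := by
  have expand : ∀ k, (stirling2 (n+1) (k+1) : ℝ) * k.factorial * lam (k+1)
      = (stirling2 n k : ℝ) * k.factorial * lam (k+1)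
        + (stirling2 n (k+1) : ℝ) * (k+1).factorial * lam (k+1) := by
    intro k
    rw [stirling2_def, Nat.factorial_succ]
    push_cast
    ring
  rw [Finset.sum_congr rfl (fun k _ => expand k), Finset.sum_add_distrib]
  congr 1
  -- ∑_{k ∈ Icc 1 n} h (k+1) = ∑_{j ∈ Icc 2 n} h j  with h j = stirling2 n j * j! * lam j
  set h : ℕ → ℝ := fun j => (stirling2 n j : ℝ) * j.factorial * lam j with hh
  show ∑ k ∈ Finset.Icc 1 n, h (k+1) = ∑ j ∈ Finset.Icc 2 n, h j
  cases n with
  | zero => simp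
  | succ N =>
      rw [← Finset.Ico_add_one_right_eq_Icc, Finset.sum_Ico_eq_sum_range,
        ← Finset.Ico_add_one_right_eq_Icc, Finset.sum_Ico_eq_sum_range]
      show ∑ i ∈ Finset.range (N+1), h (1 + i + 1) = ∑ i ∈ Finset.range N, h (2 + i)
      rw [Finset.sum_range_succ]
      have hzero : h (1 + N + 1) = 0 := by
        have hz : stirling2 (N + 1) (1 + N + 1) = 0 := stirling2_eq_zero_of_lt (by omega)
        simp [hh, hz]
      rw [hzero, add_zero]
      exact Finset.sum_congr rfl fun i _ => by rw [show 1 + i + 1 = 2 + i from by omega]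

theorem sum_zeta_mul_pow_div_two_pow (n : ℕ) :
    HasSum (fun k : ℕ => zetaNat (k + 2) * ((k : ℝ) + 2) ^ n / 2 ^ (k + 2))
      (Real.log 2 + ∑ k ∈ Finset.Icc 1 n,
        (stirling2 (n + 1) (k + 1) : ℝ) * (Nat.factorial k : ℝ) *
          (1 - (2 : ℝ) ^ (-(k : ℤ) - 1)) * zetaNat (k + 1)) := by
  set F : ℕ × ℕ → ℝ := fun p => ((p.1:ℝ)+2)^n * (1/(2*(p.2:ℝ)+2))^(p.1+2) with hF
  have hfiber : ∀ k : ℕ, HasSum (fun m => F (k, m))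
      (zetaNat (k + 2) * ((k : ℝ) + 2) ^ n / 2 ^ (k + 2)) := by
    intro k
    have h := (hasSum_zetaNat (s := k+2) (by omega)).mul_left (((k:ℝ)+2)^n * (1/2:ℝ)^(k+2))
    have e : ∀ m : ℕ, ((k:ℝ)+2)^n * (1/2:ℝ)^(k+2) * (1 / ((m : ℝ) + 1) ^ (k+2))
        = F (k, m) := by
      intro m
      rw [hF]
      simp only
      rw [← one_div_pow ((m:ℝ)+1), mul_assoc, ← mul_pow]
      congr 2
      rw [div_mul_div_comm, one_mul]
      congr 1
      ring
    have h2 := h.congr_fun fun m => (e m).symm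
    rw [show zetaNat (k + 2) * ((k : ℝ) + 2) ^ n / 2 ^ (k + 2)
        = ((k:ℝ)+2)^n * (1/2:ℝ)^(k+2) * zetaNat (k+2) by
      rw [one_div, inv_pow, ← div_eq_mul_inv]
      ring]
    exact h2
  have hnonneg : ∀ p : ℕ × ℕ, 0 ≤ F p := fun p => by rw [hF]; positivity
  have hgeom : Summable (fun k : ℕ => ((k:ℝ)+2)^n * (1/2:ℝ)^(k+2)) := by
    have h0 := summable_pow_mul_geometric_of_norm_lt_one (R := ℝ) n
      (r := 1/2) (by rw [Real.norm_eq_abs, abs_of_pos] <;> norm_num)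
    have h1 := (summable_nat_add_iff (f := fun k : ℕ => (k:ℝ)^n * (1/2:ℝ)^k) 2).2 h0
    exact h1.congr fun k => by push_cast; ring
  have hsummand : Summable (fun k : ℕ => zetaNat (k + 2) * ((k : ℝ) + 2) ^ n / 2 ^ (k + 2)) := by
    refine Summable.of_nonneg_of_le (fun k => ?_) (fun k => ?_) (hgeom.mul_left (zetaNat 2))
    · have := zetaNat_nonneg (k+2)
      positivity
    · have h1 : zetaNat (k+2) ≤ zetaNat 2 := zetaNat_le_two (by omega)
      have h2 : (0:ℝ) < 2 ^ (k+2) := by positivity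
      rw [div_le_iff₀ h2]
      calc zetaNat (k+2) * ((k:ℝ)+2)^n ≤ zetaNat 2 * ((k:ℝ)+2)^n := by
            apply mul_le_mul_of_nonneg_right h1 (by positivity)
        _ = zetaNat 2 * (((k:ℝ)+2)^n * (1/2:ℝ)^(k+2)) * 2 ^ (k+2) := by
            rw [div_pow, one_pow]
            field_simp
  have hFsummable : Summable F := by
    rw [summable_prod_of_nonneg hnonneg]
    constructor
    · intro k
      exact (hfiber k).summable
    · apply hsummand.congr
      intro k
      exact ((hfiber k).tsum_eq).symm
  have hT : HasSum F (∑' p, F p) := hFsummable.hasSum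
  have hgoal1 : HasSum (fun k : ℕ => zetaNat (k + 2) * ((k : ℝ) + 2) ^ n / 2 ^ (k + 2))
      (∑' p, F p) := hT.prod_fiberwise hfiber
  -- swapped order
  have hswap : HasSum (fun p : ℕ × ℕ => F (p.2, p.1)) (∑' p, F p) := by
    have := ((Equiv.prodComm ℕ ℕ).hasSum_iff (f := F) (a := ∑' p, F p)).2 hT
    exact this.congr_fun fun p => rfl
  have hval : HasSum (fun m : ℕ =>
      (1/(2*(m:ℝ)+1) - 1/(2*(m:ℝ)+2))
        + ∑ j ∈ Finset.Icc 1 n, (stirling2 n j : ℝ) * j.factorial * (1/(2*(m:ℝ)+1))^(j+1)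
        + ∑ j ∈ Finset.Icc 2 n, (stirling2 n j : ℝ) * j.factorial * (1/(2*(m:ℝ)+1))^j)
      (∑' p, F p) := hswap.prod_fiberwise (fun m => per_m n m)
  -- compute the sum over m directly
  have h1 : HasSum (fun m : ℕ => ∑ j ∈ Finset.Icc 1 n,
      (stirling2 n j : ℝ) * j.factorial * (1/(2*(m:ℝ)+1))^(j+1))
      (∑ j ∈ Finset.Icc 1 n, (stirling2 n j : ℝ) * j.factorial * lam (j+1)) := by
    apply hasSum_sum
    intro j hj
    have hj1 : 2 ≤ j + 1 := by
      have := (Finset.mem_Icc.1 hj).1; omega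
    exact (hasSum_odd_zeta hj1).mul_left _
  have h2 : HasSum (fun m : ℕ => ∑ j ∈ Finset.Icc 2 n,
      (stirling2 n j : ℝ) * j.factorial * (1/(2*(m:ℝ)+1))^j)
      (∑ j ∈ Finset.Icc 2 n, (stirling2 n j : ℝ) * j.factorial * lam j) := by
    apply hasSum_sum
    intro j hj
    have hj1 : 2 ≤ j := (Finset.mem_Icc.1 hj).1
    exact (hasSum_odd_zeta hj1).mul_left _
  have hval2 := (hasSum_log_two.add h1).add h2
  have hTeq := hval.unique hval2
  rw [hTeq] at hgoal1
  have hfinal : Real.log 2 + ∑ k ∈ Finset.Icc 1 n,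
      (stirling2 (n + 1) (k + 1) : ℝ) * (Nat.factorial k : ℝ) *
        (1 - (2 : ℝ) ^ (-(k : ℤ) - 1)) * zetaNat (k + 1)
      = Real.log 2 + ∑ j ∈ Finset.Icc 1 n, (stirling2 n j : ℝ) * j.factorial * lam (j+1)
        + ∑ j ∈ Finset.Icc 2 n, (stirling2 n j : ℝ) * j.factorial * lam j := by
    rw [add_assoc]
    congr 1
    rw [← stirling_id n]
    apply Finset.sum_congr rfl
    intro k _
    simp only [lam]
    have he : (-((k+1 : ℕ) : ℤ)) = (-(k:ℤ) - 1) := by push_cast; ring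
    rw [he]
    ring
  rw [hfinal]
  exact hgoal1
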